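/- Let D be a (v,k,λ)-difference set in an abelian group G of order v with gcd(v, k-λ) = 1, let p be a prime not dividing v, and let 𝔓 be a prime ideal of ℤ[ξ_v] above p. Then the p-rank of the development design Dev(D) equals the number of complex characters χ of G (including the trivial one) with χ(D) ≢ 0 (mod 𝔓). -/

import Mathlib

open Finset Matrix Submodule Module

section RankMap

variable {F K : Type*} [Field F] [Field K]
variable {m n : Type*} [Fintype m] [Fintype n] [DecidableEq m] [DecidableEq n]

lemma MM.submatrix_eq_mul (M : Matrix m n F) {k : ℕ} (r : Fin k → m) (c : Fin k → n) :
    M.submatrix r c =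
      ((1 : Matrix m m F).submatrix r id) * (M * ((1 : Matrix n n F).submatrix id c)) := by
  ext i j
  simp [Matrix.mul_apply, Matrix.one_apply, Finset.sum_ite_eq, Finset.sum_ite_eq',
    Finset.mul_sum, ite_mul, mul_ite]

lemma MM.rank_submatrix_le' (M : Matrix m n F) {k : ℕ} (r : Fin k → m) (c : Fin k → n) :
    (M.submatrix r c).rank ≤ M.rank := by
  rw [MM.submatrix_eq_mul M r c]
  exact le_trans (Matrix.rank_mul_le_right _ _) (Matrix.rank_mul_le_left _ _)

lemma MM.rank_ge_of_det_ne_zero (M : Matrix m n F) {k : ℕ} (r : Fin k → m) (c : Fin k → n)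
    (h : (M.submatrix r c).det ≠ 0) : k ≤ M.rank := by
  have hu : IsUnit (M.submatrix r c) :=
    (Matrix.isUnit_iff_isUnit_det _).2 (isUnit_iff_ne_zero.2 h)
  have := Matrix.rank_of_isUnit _ hu
  calc k = (M.submatrix r c).rank := by rw [this, Fintype.card_fin]
    _ ≤ M.rank := MM.rank_submatrix_le' M r c

lemma MM.exists_submatrix_det_ne_zero (M : Matrix m n F) :
    ∃ (r : Fin M.rank → m) (c : Fin M.rank → n), (M.submatrix r c).det ≠ 0 := by
  classical
  obtain ⟨b, hbsub, hbspan, hbind⟩ := exists_linearIndependent F (Set.range Mᵀ)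
  haveI : Fintype b := ((Set.finite_range Mᵀ).subset hbsub).fintype
  have hcardb : Fintype.card b = M.rank := by
    rw [Matrix.rank_eq_finrank_span_cols]
    change _ = finrank F (span F (Set.range Mᵀ))
    rw [← hbspan, finrank_span_set_eq_card hbind,
      Set.toFinset_card]
  have hc : ∀ x : b, ∃ j : n, Mᵀ j = (x : m → F) := fun x => hbsub x.2
  choose c0 hc0 using hc
  set N : Matrix m b F := M.submatrix id c0 with hN
  have hNT : ∀ x : b, Nᵀ x = (x : m → F) := by
    intro x; ext i; simpa [hN] using congrFun (hc0 x) i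
  have hrankN : N.rank = M.rank := by
    rw [Matrix.rank_eq_finrank_span_cols, ← hcardb]
    have : Set.range Nᵀ = b := by
      ext y; constructor
      · rintro ⟨x, rfl⟩; rw [hNT]; exact x.2
      · intro hy; exact ⟨⟨y, hy⟩, hNT ⟨y, hy⟩⟩
    change finrank F (span F (Set.range Nᵀ)) = _
    rw [this, finrank_span_set_eq_card hbind, Set.toFinset_card]
  obtain ⟨u, husub, huspan, huind⟩ := exists_linearIndependent F (Set.range N)
  haveI : Fintype u := ((Set.finite_range N).subset husub).fintype
  have hcardu : Fintype.card u = M.rank := by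
    have h1 : finrank F (span F (Set.range N)) = M.rank := by
      have : Nᵀ.rank = M.rank := by rw [Matrix.rank_transpose]; exact hrankN
      rw [← this, Matrix.rank_eq_finrank_span_cols]
      rfl
    rw [← h1, ← huspan, finrank_span_set_eq_card huind, Set.toFinset_card]
  have hr : ∀ y : u, ∃ i : m, N i = (y : b → F) := fun y => husub y.2
  choose r0 hr0 using hr
  set B : Matrix u b F := N.submatrix r0 id with hB
  have hBrow : ∀ y : u, B y = (y : b → F) := fun y => hr0 y
  let e1 : b ≃ Fin M.rank := Fintype.equivFinOfCardEq hcardb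
  let e2 : u ≃ Fin M.rank := Fintype.equivFinOfCardEq hcardu
  refine ⟨fun i => r0 (e2.symm i), fun j => c0 (e1.symm j), ?_⟩
  have hsub : M.submatrix (fun i => r0 (e2.symm i)) (fun j => c0 (e1.symm j)) =
      B.submatrix e2.symm e1.symm := rfl
  rw [hsub]
  have hind : LinearIndependent F (fun i : Fin M.rank => (B.submatrix e2.symm e1.symm) i) := by
    have h1 : LinearIndependent F (fun y : u => (y : b → F)) := huind
    have h2 : LinearIndependent F (fun i : Fin M.rank => ((e2.symm i : u) : b → F)) :=
      h1.comp e2.symm e2.symm.injective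
    have h3 := h2.map' (LinearEquiv.funCongrLeft F F e1.symm).toLinearMap
      (LinearEquiv.ker _)
    convert h3 using 1
    ext i j
    simp [hBrow, LinearEquiv.funCongrLeft_apply, Matrix.submatrix_apply]
    all_goals rfl
  have : IsUnit (B.submatrix e2.symm e1.symm) :=
    Matrix.linearIndependent_rows_iff_isUnit.1 hind
  exact isUnit_iff_ne_zero.1 ((Matrix.isUnit_iff_isUnit_det _).1 this)

lemma MM.rank_map_eq (f : F →+* K) (M : Matrix m n F) : (M.map f).rank = M.rank := by
  have hmapsub : ∀ (k : ℕ) (r : Fin k → m) (c : Fin k → n),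
      ((M.map f).submatrix r c).det = f ((M.submatrix r c).det) := by
    intro k r c
    rw [Matrix.submatrix_map]
    simp [← RingHom.mapMatrix_apply, ← RingHom.map_det]
  refine le_antisymm ?_ ?_
  · obtain ⟨r, c, h⟩ := MM.exists_submatrix_det_ne_zero (M.map f)
    refine MM.rank_ge_of_det_ne_zero M r c fun h0 => ?_
    rw [hmapsub _ r c, h0, _root_.map_zero] at h
    exact h rfl
  · obtain ⟨r, c, h⟩ := MM.exists_submatrix_det_ne_zero M
    refine MM.rank_ge_of_det_ne_zero (M.map f) r c ?_
    rw [hmapsub _ r c]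
    exact fun h0 => h (f.injective (by rw [h0, _root_.map_zero]))

end RankMap

set_option maxHeartbeats 1600000 in
/-- (MacWilliams–Mann) Let `D` be a `(v,k,λ)`-difference set in a finite
abelian group `G` of order `v` with `gcd(v, k-λ) = 1`, let `p` be a prime not
dividing `v`, and let `𝔓` be a prime ideal of `ℤ[ξ_v]` (a domain of
characteristic zero generated over `ℤ` by a primitive `v`-th root of unity)
containing `p`.  Then the `p`-rank of the development `Dev(D)` (the rank over
`𝔽_p` of its `v × v` incidence matrix) equals the number of characters `χ`
of `G` with `χ(D) ≢ 0 (mod 𝔓)`. -/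
theorem macwilliams_mann_p_rank
    (G : Type*) [CommGroup G] [Fintype G] [DecidableEq G]
    (v k lam : ℕ) (hG : Fintype.card G = v)
    (D : Finset G) (hD : D.card = k)
    (hdiff : ∀ g : G, g ≠ 1 →
      ((D ×ˢ D).filter (fun z => z.1 * z.2⁻¹ = g)).card = lam)
    (hgcd : Nat.gcd v (k - lam) = 1)
    (p : ℕ) [hp : Fact p.Prime] (hpv : ¬ p ∣ v)
    (R : Type*) [CommRing R] [IsDomain R] [CharZero R]
    (ζ : R) (hζ : IsPrimitiveRoot ζ v)
    (hR : Algebra.adjoin ℤ ({ζ} : Set R) = ⊤)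
    (𝔓 : Ideal R) (h𝔓 : 𝔓.IsPrime) (hp𝔓 : (p : R) ∈ 𝔓)
    (A : Matrix G G (ZMod p))
    (hA : ∀ g x : G, A g x = if g⁻¹ * x ∈ D then 1 else 0) :
    A.rank = Nat.card {χ : G →* R // (∑ d ∈ D, χ d) ∉ 𝔓} := by
  classical
  subst hG
  set v := Fintype.card G with hv_def
  have hv : 0 < v := Fintype.card_pos
  haveI : NeZero v := ⟨hv.ne'⟩
  haveI := h𝔓
  -- the residue field
  let K := FractionRing (R ⧸ 𝔓)
  let π : R →+* K := (algebraMap (R ⧸ 𝔓) K).comp (Ideal.Quotient.mk 𝔓)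
  have hker : ∀ x : R, π x = 0 ↔ x ∈ 𝔓 := by
    intro x
    constructor
    · intro h
      have h0 : Ideal.Quotient.mk 𝔓 x = 0 := by
        apply IsFractionRing.injective (R ⧸ 𝔓) K
        simpa [π] using h
      exact Ideal.Quotient.eq_zero_iff_mem.1 h0
    · intro h
      have h0 : Ideal.Quotient.mk 𝔓 x = 0 := Ideal.Quotient.eq_zero_iff_mem.2 h
      simp [π, h0]
  -- key lemma: a `v`-th root of unity congruent to 1 mod 𝔓 equals 1
  have key : ∀ μ : R, μ ^ v = 1 → π μ = 1 → μ = 1 := by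
    intro μ hμv hπ
    by_contra hne
    have h1 : (∑ i ∈ range v, μ ^ i) * (μ - 1) = 0 := by
      rw [geom_sum_mul, hμv, sub_self]
    have h2 : ∑ i ∈ range v, μ ^ i = 0 := by
      rcases mul_eq_zero.1 h1 with h | h
      · exact h
      · exact absurd (sub_eq_zero.1 h) hne
    have h3 : (v : K) = 0 := by
      have := congrArg π h2
      simpa [_root_.map_sum, _root_.map_pow, hπ] using this
    have h4 : (v : R) ∈ 𝔓 := by
      rw [← hker]
      simpa using h3
    have hcop : IsCoprime (p : ℤ) (v : ℤ) :=
      Nat.isCoprime_iff_coprime.2 ((Nat.Prime.coprime_iff_not_dvd hp.out).2 hpv)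
    obtain ⟨a, b, hab⟩ := hcop
    have hone : (1 : R) ∈ 𝔓 := by
      have hmem : ((a * p + b * v : ℤ) : R) ∈ 𝔓 := by
        push_cast
        exact Ideal.add_mem _ (Ideal.mul_mem_left _ _ hp𝔓) (Ideal.mul_mem_left _ _ h4)
      rw [hab] at hmem
      simpa using hmem
    exact h𝔓.ne_top ((Ideal.eq_top_iff_one 𝔓).2 hone)
  -- π ζ is a primitive v-th root of unity in K
  have hζv : ζ ^ v = 1 := hζ.pow_eq_one
  have hζK : IsPrimitiveRoot (π ζ) v := by
    refine ⟨by rw [← _root_.map_pow, hζv, _root_.map_one], ?_⟩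
    intro l hl
    have hπl : π (ζ ^ l) = 1 := by rw [_root_.map_pow]; exact hl
    have hzl : ζ ^ l = 1 :=
      key _ (by rw [← pow_mul, mul_comm, pow_mul, hζv, one_pow]) hπl
    exact (hζ.pow_eq_one_iff_dvd l).1 hzl
  -- reduction on roots of unity is bijective
  let red : rootsOfUnity v R →* rootsOfUnity v K := restrictRootsOfUnity π v
  have redcoe : ∀ u : rootsOfUnity v R, ((red u : Kˣ) : K) = π ((u : Rˣ) : R) :=
    fun u => restrictRootsOfUnity_coe_apply π u
  have redinj : Function.Injective red := by
    rw [injective_iff_map_eq_one]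
    intro u hu
    have h1 : π ((u : Rˣ) : R) = 1 := by
      rw [← redcoe u, hu]; simp
    have h2 : ((u : Rˣ) : R) ^ v = 1 := (mem_rootsOfUnity' v _).1 u.2
    have h3 := key _ h2 h1
    exact Subtype.ext (Units.ext (by simpa using h3))
  have cardRU : Nat.card (rootsOfUnity v R) = v := hζ.card_rootsOfUnity
  have cardKU : Nat.card (rootsOfUnity v K) = v := hζK.card_rootsOfUnity
  have redbij : Function.Bijective red :=
    (Nat.bijective_iff_injective_and_card red).2 ⟨redinj, by rw [cardRU, cardKU]⟩
  let ρ : rootsOfUnity v R ≃* rootsOfUnity v K := MulEquiv.ofBijective red redbij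
  -- the reduction map on characters
  let Φ : (G →* R) → (G →* K) := fun χ => π.toMonoidHom.comp χ
  have hgv : ∀ g : G, g ^ v = 1 := fun g => pow_card_eq_one
  have Φinj : Function.Injective Φ := by
    intro χ₁ χ₂ h
    ext g
    have h1 : π (χ₁ g) = π (χ₂ g) := DFunLike.congr_fun h g
    have hbb : χ₂ g * χ₂ g⁻¹ = 1 := by rw [← _root_.map_mul, mul_inv_cancel, _root_.map_one]
    have hμv : (χ₁ g * χ₂ g⁻¹) ^ v = 1 := by
      rw [mul_pow, ← _root_.map_pow, ← _root_.map_pow, hgv g, inv_pow, hgv g, inv_one,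
        _root_.map_one, _root_.map_one, one_mul]
    have hπμ : π (χ₁ g * χ₂ g⁻¹) = 1 := by
      rw [_root_.map_mul, h1, ← _root_.map_mul, hbb, _root_.map_one]
    have hone := key _ hμv hπμ
    calc χ₁ g = χ₁ g * (χ₂ g⁻¹ * χ₂ g) := by
          rw [← _root_.map_mul, inv_mul_cancel, _root_.map_one, mul_one]
      _ = (χ₁ g * χ₂ g⁻¹) * χ₂ g := by ring
      _ = χ₂ g := by rw [hone, one_mul]
  have Φsurj : Function.Surjective Φ := by
    intro ψ
    have hmem : ∀ g : G, ψ.toHomUnits g ∈ rootsOfUnity v K := by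
      intro g
      rw [mem_rootsOfUnity, ← _root_.map_pow, hgv g, _root_.map_one]
    let ψ' : G →* rootsOfUnity v K := (ψ.toHomUnits).codRestrict _ hmem
    refine ⟨(Units.coeHom R).comp (((rootsOfUnity v R).subtype).comp
      (ρ.symm.toMonoidHom.comp ψ')), ?_⟩
    ext g
    have h1 : red (ρ.symm (ψ' g)) = ψ' g := ρ.apply_symm_apply (ψ' g)
    have h2 : π (((ρ.symm (ψ' g) : Rˣ)) : R) = ((ψ' g : Kˣ) : K) := by
      rw [← redcoe, h1]
    simpa [Φ, ψ'] using h2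
  -- duality: there are exactly v characters of G with values in K
  have hexp : Monoid.exponent G ∣ v := Group.exponent_dvd_card
  obtain ⟨mexp, hmexp⟩ := hexp
  haveI : HasEnoughRootsOfUnity K (Monoid.exponent G) :=
    ⟨⟨(π ζ) ^ mexp, IsPrimitiveRoot.pow hv hζK (hmexp.trans (mul_comm _ _))⟩, inferInstance⟩
  obtain ⟨eμ⟩ := CommGroup.monoidHom_mulEquiv_of_hasEnoughRootsOfUnity G K
  let eU : (G →* Kˣ) ≃ (G →* K) :=
    { toFun := fun χ => (Units.coeHom K).comp χ
      invFun := MonoidHom.toHomUnits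
      left_inv := fun χ => MonoidHom.ext fun g => Units.ext rfl
      right_inv := fun ψ => MonoidHom.ext fun g => rfl }
  let eqv : G ≃ (G →* K) := eμ.toEquiv.symm.trans eU
  -- character p and the embedding of 𝔽_p into K
  have hpK : (p : K) = 0 := by
    have h0 : π (p : R) = 0 := (hker _).2 hp𝔓
    simpa using h0
  haveI : CharP K p := (CharP.charP_iff_prime_eq_zero hp.out).2 hpK
  let f : ZMod p →+* K := ZMod.castHom dvd_rfl K
  have hBdef : ∀ g y : G, (A.map f) g y = if g⁻¹ * y ∈ D then (1 : K) else 0 := by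
    intro g y
    rw [Matrix.map_apply, hA, apply_ite f, _root_.map_one, _root_.map_zero]
  -- the character matrix
  let P : Matrix G G K := Matrix.of fun g x => eqv x g
  let S : G → K := fun x => ∑ d ∈ D, eqv x d
  have hPunit : IsUnit P := by
    rw [← Matrix.linearIndependent_cols_iff_isUnit]
    have h1 : LinearIndependent K (fun χ : G →* K => (χ : G → K)) :=
      linearIndependent_monoidHom G K
    have h2 := h1.comp eqv eqv.injective
    convert h2 using 1
    all_goals rfl
  have hPdet : IsUnit P.det := (Matrix.isUnit_iff_isUnit_det _).1 hPunit
  have hBP : (A.map f) * P = P * Matrix.diagonal S := by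
    ext g x
    rw [Matrix.mul_apply, Matrix.mul_diagonal]
    calc ∑ y, (A.map f) g y * P y x
        = ∑ y, (if y ∈ D then eqv x (g * y) else 0) := by
          refine (Fintype.sum_equiv (Equiv.mulLeft g) _ _ fun y => ?_).symm
          simp only [hBdef, Equiv.coe_mulLeft, inv_mul_cancel_left, P, Matrix.of_apply]
          split <;> simp
      _ = ∑ d ∈ D, eqv x (g * d) := by
          rw [Finset.sum_ite_mem, Finset.univ_inter]
      _ = P g x * S x := by
          rw [Finset.mul_sum]
          exact Finset.sum_congr rfl fun d _ => by
            simp only [P, S, Matrix.of_apply, _root_.map_mul]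
  have h1 : A.rank = (A.map f).rank := (MM.rank_map_eq f A).symm
  have h2 : (A.map f).rank = (Matrix.diagonal S).rank := by
    calc (A.map f).rank = ((A.map f) * P).rank :=
        (Matrix.rank_mul_eq_left_of_isUnit_det P (A.map f) hPdet).symm
      _ = (P * Matrix.diagonal S).rank := by rw [hBP]
      _ = (Matrix.diagonal S).rank :=
        Matrix.rank_mul_eq_right_of_isUnit_det P (Matrix.diagonal S) hPdet
  have h3 : (Matrix.diagonal S).rank = Fintype.card {x : G // S x ≠ 0} :=
    Matrix.rank_diagonal S
  have h4 : Fintype.card {x : G // S x ≠ 0}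
      = Nat.card {χ : G →* R // (∑ d ∈ D, χ d) ∉ 𝔓} := by
    rw [← Nat.card_eq_fintype_card]
    refine Nat.card_congr ?_
    let eΦ : (G →* R) ≃ (G →* K) := Equiv.ofBijective Φ ⟨Φinj, Φsurj⟩
    have e1 : {x : G // S x ≠ 0} ≃ {ψ : G →* K // (∑ d ∈ D, ψ d) ≠ 0} :=
      Equiv.subtypeEquiv eqv fun x => Iff.rfl
    have e2 : {χ : G →* R // (∑ d ∈ D, χ d) ∉ 𝔓} ≃ {ψ : G →* K // (∑ d ∈ D, ψ d) ≠ 0} := by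
      refine Equiv.subtypeEquiv eΦ fun χ => ?_
      have hsum : ∑ d ∈ D, (eΦ χ) d = π (∑ d ∈ D, χ d) := by
        rw [_root_.map_sum]
        rfl
      rw [hsum]
      exact not_congr (hker _).symm
    exact e1.trans e2.symm
  rw [h1, h2, h3, h4]
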